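/- Fix a finite field 𝔽_q with q elements. For a finite set R of monic irreducible polynomials in 𝔽_q[T], let d(R) denote the minimal degree of a monic irreducible polynomial in 𝔽_q[T] not belonging to R. Then the collection of finite sets R of monic irreducible polynomials satisfying (q^{d(R)} − 1) · ∏_{x ∈ R} (q^{deg x} − 1) ≤ 2(q^{2 d(R)} + 1)(q² − 1) is finite. -/

import Mathlib

open Polynomial

/-- The minimal degree of a monic irreducible polynomial in `𝔽[T]` not belonging to the
finite set `R`. -/
noncomputable def minDegMonicIrreducibleNotIn {𝔽 : Type*} [Field 𝔽]
    (R : Finset (Polynomial 𝔽)) : ℕ :=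
  sInf {n : ℕ | ∃ p : Polynomial 𝔽, p.Monic ∧ Irreducible p ∧ p ∉ R ∧ p.natDegree = n}

theorem exists_monic_irreducible_natDegree (𝔽 : Type*) [Field 𝔽] [Fintype 𝔽]
    (n : ℕ) (hn : 0 < n) :
    ∃ p : Polynomial 𝔽, p.Monic ∧ Irreducible p ∧ p.natDegree = n := by
  classical
  set p := ringChar 𝔽 with hpdef
  haveI hP : CharP 𝔽 p := ringChar.charP 𝔽
  haveI : Fact p.Prime := ⟨CharP.char_is_prime 𝔽 p⟩
  obtain ⟨m, hcard⟩ := FiniteField.card 𝔽 p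
  set q := Fintype.card 𝔽 with hq
  have hq2 : 2 ≤ q := Fintype.one_lt_card
  have hqn : q ^ n = p ^ ((m : ℕ) * n) := by rw [hcard.2, pow_mul]
  set Ω := AlgebraicClosure 𝔽
  haveI : CharP Ω p := charP_of_injective_algebraMap (algebraMap 𝔽 Ω).injective p
  -- the subfield of elements fixed by x ↦ x ^ q ^ n
  set ψ : Ω →+* Ω := iterateFrobenius Ω p ((m : ℕ) * n) with hψ
  have hmem : ∀ x : Ω, x ∈ ψ.eqLocusField (RingHom.id Ω) ↔ x ^ q ^ n = x := by
    intro x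
    constructor
    · intro hx
      have : ψ x = x := hx
      rwa [hψ, iterateFrobenius_def, ← hqn] at this
    · intro hx
      show ψ x = RingHom.id Ω x
      rw [hψ, iterateFrobenius_def, ← hqn, hx]; rfl
  set E : IntermediateField 𝔽 Ω := (ψ.eqLocusField (RingHom.id Ω)).toIntermediateField (by
    intro x
    rw [hmem, ← map_pow, FiniteField.pow_card_pow]) with hE
  have hEmem : ∀ x : Ω, x ∈ E ↔ x ^ q ^ n = x := hmem
  -- E is the root set of X ^ q ^ n - X
  have hroot : (E : Set Ω) = (X ^ q ^ n - X : Polynomial 𝔽).rootSet Ω := by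
    ext x
    rw [Polynomial.mem_rootSet, SetLike.mem_coe, hEmem]
    constructor
    · intro hx
      refine ⟨FiniteField.X_pow_card_sub_X_ne_zero 𝔽 ?_, ?_⟩
      · exact Nat.one_lt_pow hn.ne' hq2
      · rw [map_sub, map_pow, aeval_X, hx, sub_self]
    · rintro ⟨-, hx⟩
      rw [map_sub, map_pow, aeval_X, sub_eq_zero] at hx
      exact hx
  have hsep : (X ^ q ^ n - X : Polynomial 𝔽).Separable :=
    galois_poly_separable p (q ^ n) (by rw [hqn]; exact dvd_pow_self p (by positivity))
  have h1 := Polynomial.card_rootSet_eq_natDegree hsep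
    (IsAlgClosed.splits ((X ^ q ^ n - X : Polynomial 𝔽).map (algebraMap 𝔽 Ω)))
  rw [FiniteField.X_pow_card_sub_X_natDegree_eq 𝔽 (Nat.one_lt_pow hn.ne' hq2)] at h1
  haveI : Finite E := Finite.of_equiv _ (Equiv.setCongr hroot).symm
  have hcardE : Nat.card E = q ^ n := by
    have e : (E : Set Ω) ≃ ((X ^ q ^ n - X : Polynomial 𝔽).rootSet Ω) := Equiv.setCongr hroot
    rw [show Nat.card E = Nat.card (E : Set Ω) from rfl, Nat.card_congr e,
      Nat.card_eq_fintype_card, h1]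
  haveI : Module.Finite 𝔽 E := Module.Finite.of_finite
  have hfr : Module.finrank 𝔽 E = n := by
    haveI : Fintype E := Fintype.ofFinite _
    have h2 := Module.card_eq_pow_finrank (K := 𝔽) (V := E)
    rw [← Nat.card_eq_fintype_card, hcardE] at h2
    exact (Nat.pow_right_injective hq2 h2.symm)
  obtain ⟨α, hα⟩ := Field.exists_primitive_element_of_finite_top 𝔽 E
  have hint : IsIntegral 𝔽 α := IsIntegral.of_finite 𝔽 α
  refine ⟨minpoly 𝔽 α, minpoly.monic hint, minpoly.irreducible hint, ?_⟩
  rw [← IntermediateField.adjoin.finrank hint, hα, ← hfr]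
  exact IntermediateField.topEquiv.toLinearEquiv.finrank_eq

theorem prod_le_prod_of_subset_int {ι : Type*} {T R : Finset ι} (f : ι → ℤ)
    (hsub : T ⊆ R) (h : ∀ i ∈ R, 1 ≤ f i) : ∏ i ∈ T, f i ≤ ∏ i ∈ R, f i := by
  classical
  have h0 : (0 : ℤ) ≤ ∏ i ∈ T, f i :=
    Finset.prod_nonneg fun i hi => by linarith [h i (hsub hi)]
  have h1 : (1 : ℤ) ≤ ∏ i ∈ R \ T, f i := by
    calc (1 : ℤ) = ∏ _i ∈ R \ T, (1 : ℤ) := (Finset.prod_const_one).symm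
      _ ≤ ∏ i ∈ R \ T, f i :=
        Finset.prod_le_prod (fun _ _ => zero_le_one) fun i hi => h i (Finset.mem_sdiff.1 hi).1
  calc ∏ i ∈ T, f i ≤ (∏ i ∈ R \ T, f i) * ∏ i ∈ T, f i := le_mul_of_one_le_left h0 h1
    _ = ∏ i ∈ R, f i := Finset.prod_sdiff hsub

/-- For a fixed finite field `𝔽_q`, the collection of finite sets `R` of monic irreducible
polynomials in `𝔽_q[T]` satisfying
`(q^{d(R)} − 1) · ∏_{x ∈ R} (q^{deg x} − 1) ≤ 2(q^{2 d(R)} + 1)(q² − 1)`,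
where `d(R)` is the minimal degree of a monic irreducible polynomial not in `R`, is finite. -/
theorem finitely_many_ramification_sets (𝔽 : Type*) [Field 𝔽] [Fintype 𝔽] (q : ℕ)
    (hq : Fintype.card 𝔽 = q) :
    {R : Finset (Polynomial 𝔽) | (∀ x ∈ R, x.Monic ∧ Irreducible x) ∧
      ((q : ℤ) ^ minDegMonicIrreducibleNotIn R - 1) *
          ∏ x ∈ R, ((q : ℤ) ^ x.natDegree - 1) ≤
        2 * ((q : ℤ) ^ (2 * minDegMonicIrreducibleNotIn R) + 1) * ((q : ℤ) ^ 2 - 1)}.Finite := by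
  classical
  have hq2 : 2 ≤ q := by rw [← hq]; exact Fintype.one_lt_card
  have hQ : (2 : ℤ) ≤ (q : ℤ) := by exact_mod_cast hq2
  have hQ0 : (0 : ℤ) ≤ (q : ℤ) := by linarith
  have hQ1 : (1 : ℤ) < (q : ℤ) := by linarith
  -- choice of a monic irreducible of each positive degree
  have hex : ∀ k : ℕ, ∃ p : Polynomial 𝔽, 0 < k →
      p.Monic ∧ Irreducible p ∧ p.natDegree = k := by
    intro k
    rcases Nat.eq_zero_or_pos k with hk | hk
    · exact ⟨0, fun h => absurd hk (by omega)⟩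
    · obtain ⟨p, h1, h2, h3⟩ := exists_monic_irreducible_natDegree 𝔽 k hk
      exact ⟨p, fun _ => ⟨h1, h2, h3⟩⟩
  choose pick hpick using hex
  -- basic power inequality
  have hpow : ∀ k : ℕ, (q : ℤ) ^ k ≤ (q : ℤ) ^ (k + 1) - 1 := by
    intro k
    have h1 : (1 : ℤ) ≤ (q : ℤ) ^ k := one_le_pow₀ (by linarith)
    have : (q : ℤ) ^ (k + 1) = (q : ℤ) ^ k * (q : ℤ) := pow_succ _ _
    nlinarith
  -- the universe of allowed polynomials
  set U : Set (Polynomial 𝔽) := {x | x.Monic ∧ x.natDegree ≤ 19} with hU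
  have hUfin : U.Finite := by
    have himg : (Set.InjOn (fun p : Polynomial 𝔽 => fun i : Fin 20 => p.coeff i) U) := by
      intro a ha b hb hab
      ext i
      rcases le_or_gt i 19 with hi | hi
      · exact congrFun hab ⟨i, by omega⟩
      · rw [Polynomial.coeff_eq_zero_of_natDegree_lt (lt_of_le_of_lt ha.2 hi),
          Polynomial.coeff_eq_zero_of_natDegree_lt (lt_of_le_of_lt hb.2 hi)]
    exact Set.Finite.of_finite_image (Set.toFinite _) himg
  -- the collection of finsets inside U is finite
  have hcoll : {R : Finset (Polynomial 𝔽) | ↑R ⊆ U}.Finite := by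
    refine Set.Finite.ofFinset hUfin.toFinset.powerset fun R => ?_
    rw [Finset.mem_powerset, Set.Finite.subset_toFinset, Set.mem_setOf_eq]
  refine hcoll.subset ?_
  rintro R ⟨hRmono, hineq⟩
  intro x hxR
  obtain ⟨d, hd⟩ : ∃ d, minDegMonicIrreducibleNotIn R = d := ⟨_, rfl⟩
  rw [hd] at hineq
  -- the defining set is nonempty
  have hne : {n : ℕ | ∃ p : Polynomial 𝔽, p.Monic ∧ Irreducible p ∧ p ∉ R ∧
      p.natDegree = n}.Nonempty := by
    obtain ⟨h1, h2, h3⟩ := hpick (R.sup Polynomial.natDegree + 1) (Nat.succ_pos _)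
    refine ⟨_, pick (R.sup Polynomial.natDegree + 1), h1, h2, fun hmem => ?_, h3⟩
    have := Finset.le_sup (f := Polynomial.natDegree) hmem
    omega
  have hdmem : d ∈ {n : ℕ | ∃ p : Polynomial 𝔽, p.Monic ∧ Irreducible p ∧ p ∉ R ∧
      p.natDegree = n} := hd ▸ (Nat.sInf_mem hne : minDegMonicIrreducibleNotIn R ∈ _)
  obtain ⟨p0, hp0M, hp0I, hp0R, hp0D⟩ := hdmem
  have hd1 : 1 ≤ d := by
    have := hp0I.natDegree_pos
    omega
  have hmin : ∀ y : Polynomial 𝔽, y.Monic → Irreducible y → y.natDegree < d → y ∈ R := by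
    intro y hM hI hlt
    by_contra hyR
    have hymem : y.natDegree ∈ {n : ℕ | ∃ p : Polynomial 𝔽, p.Monic ∧ Irreducible p ∧ p ∉ R ∧
        p.natDegree = n} := ⟨y, hM, hI, hyR, rfl⟩
    have h2 : d ≤ y.natDegree := hd ▸ (Nat.sInf_le hymem : minDegMonicIrreducibleNotIn R ≤ _)
    omega
  -- each factor is at least 1
  have hfac : ∀ y ∈ R, (1 : ℤ) ≤ (q : ℤ) ^ y.natDegree - 1 := by
    intro y hy
    have h1 : 1 ≤ y.natDegree := (hRmono y hy).2.natDegree_pos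
    have h2 : (q : ℤ) ^ 1 ≤ (q : ℤ) ^ y.natDegree := pow_le_pow_right₀ (by linarith) h1
    rw [pow_one] at h2
    linarith
  have hprod1 : (1 : ℤ) ≤ ∏ y ∈ R, ((q : ℤ) ^ y.natDegree - 1) := by
    calc (1 : ℤ) = ∏ _y ∈ R, (1 : ℤ) := (Finset.prod_const_one).symm
      _ ≤ ∏ y ∈ R, ((q : ℤ) ^ y.natDegree - 1) :=
        Finset.prod_le_prod (fun _ _ => zero_le_one) hfac
  -- bound on the RHS
  have hRHS : 2 * ((q : ℤ) ^ (2 * d) + 1) * ((q : ℤ) ^ 2 - 1) ≤ (q : ℤ) ^ (2 * d + 4) := by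
    have h1 : (1 : ℤ) ≤ (q : ℤ) ^ (2 * d) := one_le_pow₀ (by linarith)
    have h2 : (q : ℤ) ^ (2 * d + 4) = (q : ℤ) ^ (2 * d) * (q : ℤ) ^ 4 := pow_add _ _ _
    have h3 : (4 : ℤ) ≤ (q : ℤ) ^ 2 := by nlinarith
    have hA : (0 : ℤ) ≤ (q : ℤ) ^ (2 * d) := by linarith
    have hq2nn : (0 : ℤ) ≤ (q : ℤ) ^ 2 := by positivity
    have s1 : 2 * ((q : ℤ) ^ (2 * d) + 1) * ((q : ℤ) ^ 2 - 1) ≤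
        (4 * (q : ℤ) ^ (2 * d)) * (q : ℤ) ^ 2 := by
      nlinarith [mul_nonneg (sub_nonneg.2 h1) hq2nn]
    have s2 : (4 * (q : ℤ) ^ (2 * d)) * (q : ℤ) ^ 2 ≤ (q : ℤ) ^ (2 * d) * (q : ℤ) ^ 4 := by
      have h5 : (4 : ℤ) * (q : ℤ) ^ 2 ≤ (q : ℤ) ^ 4 := by nlinarith
      nlinarith [mul_le_mul_of_nonneg_left h5 hA]
    rw [h2]
    linarith
  -- d is at most 7
  have hdle : d ≤ 7 := by
    by_contra hdg
    push_neg at hdg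
    obtain ⟨e, rfl⟩ : ∃ e, d = e + 8 := ⟨d - 8, by omega⟩
    obtain ⟨haM, haI, haD⟩ := hpick (e + 7) (by omega)
    obtain ⟨hbM, hbI, hbD⟩ := hpick (e + 6) (by omega)
    obtain ⟨hcM, hcI, hcD⟩ := hpick (e + 5) (by omega)
    set a := pick (e + 7)
    set b := pick (e + 6)
    set c := pick (e + 5)
    have haR : a ∈ R := hmin a haM haI (by omega)
    have hbR : b ∈ R := hmin b hbM hbI (by omega)
    have hcR : c ∈ R := hmin c hcM hcI (by omega)
    have hab : a ≠ b := fun h => by rw [h, hbD] at haD; omega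
    have hac : a ≠ c := fun h => by rw [h, hcD] at haD; omega
    have hbc : b ≠ c := fun h => by rw [h, hcD] at hbD; omega
    have hsub : ({a, b, c} : Finset (Polynomial 𝔽)) ⊆ R := by
      intro y hy
      simp only [Finset.mem_insert, Finset.mem_singleton] at hy
      rcases hy with rfl | rfl | rfl <;> assumption
    have hTprod : ∏ y ∈ ({a, b, c} : Finset (Polynomial 𝔽)), ((q : ℤ) ^ y.natDegree - 1) =
        ((q : ℤ) ^ (e + 7) - 1) * (((q : ℤ) ^ (e + 6) - 1) * ((q : ℤ) ^ (e + 5) - 1)) := by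
      rw [Finset.prod_insert (by simp [hab, hac]), Finset.prod_insert (by simp [hbc]),
        Finset.prod_singleton, haD, hbD, hcD]
    have hprodle : ((q : ℤ) ^ (e + 7) - 1) * (((q : ℤ) ^ (e + 6) - 1) * ((q : ℤ) ^ (e + 5) - 1)) ≤
        ∏ y ∈ R, ((q : ℤ) ^ y.natDegree - 1) := by
      rw [← hTprod]
      exact prod_le_prod_of_subset_int _ hsub hfac
    -- assemble the contradiction
    have key : (q : ℤ) ^ (4 * e + 22) ≤ (q : ℤ) ^ (2 * (e + 8) + 4) := by
      have h7 := hpow (e + 7)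
      have h6 := hpow (e + 6)
      have h5 := hpow (e + 5)
      have h4 := hpow (e + 4)
      have e1 : (1 : ℤ) ≤ (q : ℤ) ^ (e + 4) := one_le_pow₀ (by linarith)
      have e2 : (1 : ℤ) ≤ (q : ℤ) ^ (e + 5) := one_le_pow₀ (by linarith)
      have e3 : (1 : ℤ) ≤ (q : ℤ) ^ (e + 6) := one_le_pow₀ (by linarith)
      have e4 : (1 : ℤ) ≤ (q : ℤ) ^ (e + 7) := one_le_pow₀ (by linarith)
      have hsplit : (q : ℤ) ^ (4 * e + 22) =
          (q : ℤ) ^ (e + 7) * ((q : ℤ) ^ (e + 6) * ((q : ℤ) ^ (e + 5) * (q : ℤ) ^ (e + 4))) := by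
        rw [← pow_add, ← pow_add, ← pow_add]; ring_nf
      calc (q : ℤ) ^ (4 * e + 22)
          = (q : ℤ) ^ (e + 7) * ((q : ℤ) ^ (e + 6) * ((q : ℤ) ^ (e + 5) * (q : ℤ) ^ (e + 4))) :=
            hsplit
        _ ≤ ((q : ℤ) ^ (e + 8) - 1) *
              (((q : ℤ) ^ (e + 7) - 1) * (((q : ℤ) ^ (e + 6) - 1) * ((q : ℤ) ^ (e + 5) - 1))) := by
            apply mul_le_mul (hpow (e + 7)) ?_ (by positivity) (by linarith)
            apply mul_le_mul (hpow (e + 6)) ?_ (by positivity) (by linarith)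
            exact mul_le_mul (hpow (e + 5)) (hpow (e + 4)) (by positivity) (by linarith)
        _ ≤ ((q : ℤ) ^ (e + 8) - 1) * ∏ y ∈ R, ((q : ℤ) ^ y.natDegree - 1) := by
            apply mul_le_mul_of_nonneg_left hprodle (by linarith)
        _ ≤ 2 * ((q : ℤ) ^ (2 * (e + 8)) + 1) * ((q : ℤ) ^ 2 - 1) := hineq
        _ ≤ (q : ℤ) ^ (2 * (e + 8) + 4) := hRHS
    rw [pow_le_pow_iff_right₀ hQ1] at key
    omega
  -- degree bound for elements of R
  have hxd : (q : ℤ) ^ x.natDegree - 1 ≤ ∏ y ∈ R, ((q : ℤ) ^ y.natDegree - 1) := by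
    have := prod_le_prod_of_subset_int (fun y : Polynomial 𝔽 => (q : ℤ) ^ y.natDegree - 1)
      (Finset.singleton_subset_iff.2 hxR) hfac
    simpa using this
  have hQd1 : (1 : ℤ) ≤ (q : ℤ) ^ d - 1 := by
    have := hpow (d - 1)
    have h1 : (1 : ℤ) ≤ (q : ℤ) ^ (d - 1) := one_le_pow₀ (by linarith)
    have h2 : d - 1 + 1 = d := by omega
    rw [h2] at this
    linarith
  have hprodle2 : ∏ y ∈ R, ((q : ℤ) ^ y.natDegree - 1) ≤ (q : ℤ) ^ (2 * d + 4) := by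
    calc ∏ y ∈ R, ((q : ℤ) ^ y.natDegree - 1)
        ≤ ((q : ℤ) ^ d - 1) * ∏ y ∈ R, ((q : ℤ) ^ y.natDegree - 1) :=
          le_mul_of_one_le_left (by linarith) hQd1
      _ ≤ 2 * ((q : ℤ) ^ (2 * d) + 1) * ((q : ℤ) ^ 2 - 1) := hineq
      _ ≤ (q : ℤ) ^ (2 * d + 4) := hRHS
  have hdeg19 : x.natDegree ≤ 19 := by
    have h18 : (q : ℤ) ^ (2 * d + 4) ≤ (q : ℤ) ^ 18 :=
      pow_le_pow_right₀ (by linarith) (by omega)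
    have h19 : (q : ℤ) ^ 18 + 1 ≤ (q : ℤ) ^ 19 := by
      have := hpow 18
      norm_num at this
      linarith
    have : (q : ℤ) ^ x.natDegree ≤ (q : ℤ) ^ 19 := by linarith
    exact (pow_le_pow_iff_right₀ hQ1).1 this
  exact ⟨(hRmono x hxR).1, hdeg19⟩
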